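/- arXiv:2603.01917 — 4 statements merged into one kernel-verified Lean document; each statement's English description precedes it below -/
import Mathlib

section
/- For all vectors u, v in ℝ^d and r ≥ 1, the monotonicity inequality ⟨|u|^{r-1}u - |v|^{r-1}v, u - v⟩ ≥ (1/2)|u|^{r-1}|u-v|² + (1/2)|v|^{r-1}|u-v|² holds, where ⟨·,·⟩ is the Euclidean inner product. -/
open Real

theorem stmt_0 (d : ℕ) (u v : EuclideanSpace ℝ (Fin d)) (r : ℝ) (hr : 1 ≤ r) :
    (inner ℝ (‖u‖ ^ (r - 1) • u - ‖v‖ ^ (r - 1) • v) (u - v) : ℝ) ≥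
      (1 / 2) * ‖u‖ ^ (r - 1) * ‖u - v‖ ^ 2 + (1 / 2) * ‖v‖ ^ (r - 1) * ‖u - v‖ ^ 2 := by
  set a := ‖u‖ ^ (r - 1) with ha
  set b := ‖v‖ ^ (r - 1) with hb
  have hre : (0:ℝ) ≤ r - 1 := by linarith
  have key : 0 ≤ (a - b) * (‖u‖ ^ 2 - ‖v‖ ^ 2) := by
    rcases le_total ‖u‖ ‖v‖ with h | h
    · have h1 : a ≤ b := Real.rpow_le_rpow (norm_nonneg u) h hre
      have h2 : ‖u‖ ^ 2 ≤ ‖v‖ ^ 2 := by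
        exact pow_le_pow_left₀ (norm_nonneg u) h 2
      nlinarith
    · have h1 : b ≤ a := Real.rpow_le_rpow (norm_nonneg v) h hre
      have h2 : ‖v‖ ^ 2 ≤ ‖u‖ ^ 2 := by
        exact pow_le_pow_left₀ (norm_nonneg v) h 2
      exact mul_nonneg (by linarith) (by linarith)
  have hexp : (inner ℝ (a • u - b • v) (u - v) : ℝ)
      = a * ‖u‖ ^ 2 + b * ‖v‖ ^ 2 - (a + b) * inner ℝ u v := by
    simp only [inner_sub_left, inner_sub_right, real_inner_smul_left,
      real_inner_self_eq_norm_sq, real_inner_comm v u]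
    ring
  have hnorm : ‖u - v‖ ^ 2 = ‖u‖ ^ 2 - 2 * inner ℝ u v + ‖v‖ ^ 2 :=
    norm_sub_sq_real u v
  rw [hexp, hnorm]
  nlinarith [key]
end

section
/- For all vectors u, v in ℝ^d and r ≥ 2, ⟨|u|^{r-1}u - |v|^{r-1}v, u - v⟩ ≥ 2^{-(r-1)}|u - v|^{r+1}, where ⟨·,·⟩ is the Euclidean inner product. -/
open Real NNReal

lemma aux_pow (x y : ℝ) (hx : 0 ≤ x) (hy : 0 ≤ y) {p : ℝ} (hp : 1 ≤ p) :
    (x + y) ^ p ≤ (2:ℝ) ^ (p - 1) * (x ^ p + y ^ p) := by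
  lift x to ℝ≥0 using hx
  lift y to ℝ≥0 using hy
  exact_mod_cast NNReal.rpow_add_le_mul_rpow_add_rpow x y hp

theorem stmt_1 (d : ℕ) (u v : EuclideanSpace ℝ (Fin d)) (r : ℝ) (hr : 2 ≤ r) :
    (inner ℝ (‖u‖ ^ (r - 1) • u - ‖v‖ ^ (r - 1) • v) (u - v) : ℝ) ≥
      (2 : ℝ) ^ (-(r - 1)) * ‖u - v‖ ^ (r + 1) := by
  set a := ‖u‖ ^ (r - 1) with ha
  set b := ‖v‖ ^ (r - 1) with hb
  have hr1 : (1 : ℝ) ≤ r - 1 := by linarith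
  have ha0 : 0 ≤ a := rpow_nonneg (norm_nonneg u) _
  have hb0 : 0 ≤ b := rpow_nonneg (norm_nonneg v) _
  -- key identity
  have hid : (inner ℝ (a • u - b • v) (u - v) : ℝ) =
      (a + b) / 2 * ‖u - v‖ ^ 2 + (a - b) * (‖u‖ ^ 2 - ‖v‖ ^ 2) / 2 := by
    rw [inner_sub_left, inner_sub_right, inner_sub_right, real_inner_smul_left,
      real_inner_smul_left, real_inner_smul_left, real_inner_smul_left,
      norm_sub_sq_real, real_inner_self_eq_norm_sq, real_inner_self_eq_norm_sq,
      real_inner_comm v u]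
    ring
  -- same sign term
  have hsign : 0 ≤ (a - b) * (‖u‖ ^ 2 - ‖v‖ ^ 2) := by
    rcases le_total ‖u‖ ‖v‖ with h | h
    · have h1 : a ≤ b := rpow_le_rpow (norm_nonneg u) h (by linarith)
      have h2 : ‖u‖ ^ 2 ≤ ‖v‖ ^ 2 := pow_le_pow_left₀ (norm_nonneg u) h 2
      nlinarith
    · have h1 : b ≤ a := rpow_le_rpow (norm_nonneg v) h (by linarith)
      have h2 : ‖v‖ ^ 2 ≤ ‖u‖ ^ 2 := pow_le_pow_left₀ (norm_nonneg v) h 2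
      nlinarith
  have hlow : (a + b) / 2 * ‖u - v‖ ^ 2 ≤ (inner ℝ (a • u - b • v) (u - v) : ℝ) := by
    rw [hid]; linarith
  -- bound (a+b)/2 from below
  have hpow : ‖u - v‖ ^ (r - 1) ≤ 2 ^ (r - 2) * (a + b) := by
    calc ‖u - v‖ ^ (r - 1) ≤ (‖u‖ + ‖v‖) ^ (r - 1) :=
          rpow_le_rpow (norm_nonneg _) (norm_sub_le u v) (by linarith)
      _ ≤ 2 ^ (r - 1 - 1) * (a + b) := aux_pow _ _ (norm_nonneg u) (norm_nonneg v) hr1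
      _ = 2 ^ (r - 2) * (a + b) := by rw [show r - 1 - 1 = r - 2 by ring]
  have h2r : (0:ℝ) < 2 ^ (r - 2) := rpow_pos_of_pos two_pos _
  have hkey : (2:ℝ) ^ (-(r - 1)) * ‖u - v‖ ^ (r - 1) ≤ (a + b) / 2 := by
    rw [rpow_neg (by norm_num : (0:ℝ) ≤ 2)]
    rw [inv_mul_le_iff₀ (rpow_pos_of_pos two_pos _)]
    calc ‖u - v‖ ^ (r - 1) ≤ 2 ^ (r - 2) * (a + b) := hpow
      _ = 2 ^ (r - 1) * ((a + b) / 2) := by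
          rw [show r - 1 = (r - 2) + 1 by ring, rpow_add two_pos, Real.rpow_one]; ring
  rcases eq_or_lt_of_le (norm_nonneg (u - v)) with h0 | h0
  · have huv : u = v := by
      have := norm_eq_zero.mp h0.symm; exact sub_eq_zero.mp this
    simp [huv, ← h0, Real.zero_rpow (by positivity : r + 1 ≠ 0)]
  · have : (2:ℝ) ^ (-(r - 1)) * ‖u - v‖ ^ (r + 1) =
        (2:ℝ) ^ (-(r - 1)) * ‖u - v‖ ^ (r - 1) * ‖u - v‖ ^ 2 := by
      rw [mul_assoc, ← rpow_natCast (‖u - v‖) 2, ← rpow_add h0,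
        show r - 1 + (2:ℕ) = r + 1 by push_cast; ring]
    rw [ge_iff_le, this]
    calc (2:ℝ) ^ (-(r - 1)) * ‖u - v‖ ^ (r - 1) * ‖u - v‖ ^ 2
        ≤ (a + b) / 2 * ‖u - v‖ ^ 2 := by
          apply mul_le_mul_of_nonneg_right hkey (by positivity)
      _ ≤ _ := hlow
end

section
/- For all vectors u, v, w in ℝ^d and r ≥ 1, |⟨|u|^{r-1}u - |v|^{r-1}v, w⟩| ≤ r (|u| + |v|)^{r-1} |u - v| |w|. -/
open Real

/-- Scalar key inequality: `(a^p - b^p) * b ≤ p * (a+b)^p * (a-b)` for `0 ≤ b ≤ a`, `0 ≤ p`. -/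
lemma scalar_key {a b p : ℝ} (hp : 0 ≤ p) (hb : 0 ≤ b) (hba : b ≤ a) :
    (a ^ p - b ^ p) * b ≤ p * (a + b) ^ p * (a - b) := by
  rcases eq_or_lt_of_le hb with hb0 | hb0
  · rw [← hb0, mul_zero]
    have ha' : (0:ℝ) ≤ a := hb0.le.trans hba
    have : (0:ℝ) ≤ (a + 0) ^ p := Real.rpow_nonneg (by linarith) p
    have : (0:ℝ) ≤ a - 0 := by linarith
    positivity
  have ha : 0 < a := lt_of_lt_of_le hb0 hba
  have hab : (0:ℝ) < a + b := by linarith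
  rcases le_total p 1 with hp1 | hp1
  · -- concave case: a^p ≤ b^p + p * b^(p-1) * (a - b)
    have ht : (-1:ℝ) ≤ (a - b) / b := by
      have : (0:ℝ) ≤ (a - b) / b := by
        apply div_nonneg (by linarith) hb
      linarith
    have hbern := rpow_one_add_le_one_add_mul_self ht hp hp1
    have hrw : 1 + (a - b) / b = a / b := by field_simp; ring
    rw [hrw] at hbern
    have hdiv : (a / b) ^ p = a ^ p / b ^ p := Real.div_rpow ha.le hb p
    rw [hdiv] at hbern
    have hbp : (0:ℝ) < b ^ p := Real.rpow_pos_of_pos hb0 p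
    have h1 : a ^ p - b ^ p ≤ p * b ^ p * ((a - b) / b) := by
      have := mul_le_mul_of_nonneg_left hbern hbp.le
      rw [mul_add, mul_one, mul_div_cancel₀ _ hbp.ne'] at this
      nlinarith
    have h2 : (a ^ p - b ^ p) * b ≤ p * b ^ p * (a - b) := by
      have := mul_le_mul_of_nonneg_right h1 hb
      calc (a ^ p - b ^ p) * b ≤ p * b ^ p * ((a - b) / b) * b := this
        _ = p * b ^ p * (a - b) := by field_simp
    refine h2.trans ?_
    have : b ^ p ≤ (a + b) ^ p := Real.rpow_le_rpow hb (by linarith) hp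
    have hab' : (0:ℝ) ≤ a - b := by linarith
    exact mul_le_mul_of_nonneg_right (mul_le_mul_of_nonneg_left this hp) hab'
  · -- convex case: a^p - b^p ≤ p * a^(p-1) * (a - b)
    have ht : (-1:ℝ) ≤ (b - a) / a := by
      rw [neg_le, ← neg_div, neg_sub]
      exact (div_le_one ha).2 (by linarith)
    have hbern := one_add_mul_self_le_rpow_one_add ht hp1
    have hrw : 1 + (b - a) / a = b / a := by field_simp; ring
    rw [hrw] at hbern
    have hdiv : (b / a) ^ p = b ^ p / a ^ p := Real.div_rpow hb ha.le p
    rw [hdiv] at hbern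
    have hap : (0:ℝ) < a ^ p := Real.rpow_pos_of_pos ha p
    have h1 : a ^ p - b ^ p ≤ p * a ^ p * ((a - b) / a) := by
      have := mul_le_mul_of_nonneg_left hbern hap.le
      rw [mul_add, mul_one, mul_div_cancel₀ _ hap.ne'] at this
      have : a ^ p + a ^ p * (p * ((b - a) / a)) ≤ b ^ p := this
      have heq : a ^ p * (p * ((b - a) / a)) = -(p * a ^ p * ((a - b) / a)) := by
        field_simp; ring
      linarith [heq ▸ this]
    have h2 : (a ^ p - b ^ p) * b ≤ p * a ^ p * ((a - b) / a) * b := by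
      apply mul_le_mul_of_nonneg_right h1 hb
    refine h2.trans ?_
    have hkey : a ^ p * b / a ≤ (a + b) ^ p := by
      have e1 : a ^ p / a = a ^ (p - 1) := by
        rw [Real.rpow_sub ha, Real.rpow_one]
      have e2 : a ^ (p - 1) ≤ (a + b) ^ (p - 1) :=
        Real.rpow_le_rpow ha.le (by linarith) (by linarith)
      have e3 : (a + b) ^ (p - 1) * (a + b) = (a + b) ^ p := by
        rw [← Real.rpow_add_one hab.ne' (p - 1), sub_add_cancel]
      calc a ^ p * b / a = a ^ p / a * b := by ring
        _ = a ^ (p - 1) * b := by rw [e1]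
        _ ≤ (a + b) ^ (p - 1) * (a + b) := by
            apply mul_le_mul e2 (by linarith) hb (by positivity)
        _ = (a + b) ^ p := e3
    have hab' : (0:ℝ) ≤ a - b := by linarith
    calc p * a ^ p * ((a - b) / a) * b = p * (a ^ p * b / a) * (a - b) := by ring
      _ ≤ p * (a + b) ^ p * (a - b) := by
          apply mul_le_mul_of_nonneg_right (mul_le_mul_of_nonneg_left hkey hp) hab'

/-- Vector inequality assuming `‖v‖ ≤ ‖u‖`. -/
lemma vec_key {E : Type*} [NormedAddCommGroup E] [InnerProductSpace ℝ E]
    (u v : E) {s : ℝ} (hs : 0 ≤ s) (h : ‖v‖ ≤ ‖u‖) :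
    ‖(‖u‖ ^ s) • u - (‖v‖ ^ s) • v‖ ≤ (1 + s) * (‖u‖ + ‖v‖) ^ s * ‖u - v‖ := by
  have hdecomp : (‖u‖ ^ s) • u - (‖v‖ ^ s) • v
      = (‖u‖ ^ s) • (u - v) + (‖u‖ ^ s - ‖v‖ ^ s) • v := by
    rw [smul_sub, sub_smul]; abel
  have hmono : ‖v‖ ^ s ≤ ‖u‖ ^ s := Real.rpow_le_rpow (norm_nonneg v) h hs
  have h1 : ‖(‖u‖ ^ s) • (u - v)‖ = ‖u‖ ^ s * ‖u - v‖ := by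
    rw [norm_smul, Real.norm_eq_abs, abs_of_nonneg (by positivity)]
  have h2 : ‖(‖u‖ ^ s - ‖v‖ ^ s) • v‖ = (‖u‖ ^ s - ‖v‖ ^ s) * ‖v‖ := by
    rw [norm_smul, Real.norm_eq_abs, abs_of_nonneg (by linarith)]
  have hsk := scalar_key hs (norm_nonneg v) h
  have hnn : ‖u‖ - ‖v‖ ≤ ‖u - v‖ := norm_sub_norm_le u v
  have hupow : ‖u‖ ^ s ≤ (‖u‖ + ‖v‖) ^ s :=
    Real.rpow_le_rpow (norm_nonneg u) (by linarith [norm_nonneg v]) hs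
  have habp : (0:ℝ) ≤ (‖u‖ + ‖v‖) ^ s := by positivity
  calc ‖(‖u‖ ^ s) • u - (‖v‖ ^ s) • v‖
      ≤ ‖(‖u‖ ^ s) • (u - v)‖ + ‖(‖u‖ ^ s - ‖v‖ ^ s) • v‖ := by
        rw [hdecomp]; exact norm_add_le _ _
    _ = ‖u‖ ^ s * ‖u - v‖ + (‖u‖ ^ s - ‖v‖ ^ s) * ‖v‖ := by rw [h1, h2]
    _ ≤ (‖u‖ + ‖v‖) ^ s * ‖u - v‖ + s * (‖u‖ + ‖v‖) ^ s * (‖u‖ - ‖v‖) := by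
        gcongr
    _ ≤ (‖u‖ + ‖v‖) ^ s * ‖u - v‖ + s * (‖u‖ + ‖v‖) ^ s * ‖u - v‖ := by
        gcongr
    _ = (1 + s) * (‖u‖ + ‖v‖) ^ s * ‖u - v‖ := by ring

theorem stmt_2 (d : ℕ) (u v w : EuclideanSpace ℝ (Fin d)) (r : ℝ) (hr : 1 ≤ r) :
    |(inner ℝ (‖u‖ ^ (r - 1) • u - ‖v‖ ^ (r - 1) • v) w : ℝ)| ≤
      r * (‖u‖ + ‖v‖) ^ (r - 1) * ‖u - v‖ * ‖w‖ := by
  have hs : (0:ℝ) ≤ r - 1 := by linarith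
  have key : ‖(‖u‖ ^ (r-1)) • u - (‖v‖ ^ (r-1)) • v‖
      ≤ r * (‖u‖ + ‖v‖) ^ (r - 1) * ‖u - v‖ := by
    rcases le_total ‖v‖ ‖u‖ with h | h
    · have := vec_key u v hs h
      rw [show (1:ℝ) + (r - 1) = r by ring] at this
      exact this
    · have := vec_key v u hs h
      rw [show (1:ℝ) + (r - 1) = r by ring] at this
      calc ‖(‖u‖ ^ (r-1)) • u - (‖v‖ ^ (r-1)) • v‖
          = ‖(‖v‖ ^ (r-1)) • v - (‖u‖ ^ (r-1)) • u‖ := norm_sub_rev _ _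
        _ ≤ r * (‖v‖ + ‖u‖) ^ (r - 1) * ‖v - u‖ := this
        _ = r * (‖u‖ + ‖v‖) ^ (r - 1) * ‖u - v‖ := by
            rw [add_comm ‖v‖, norm_sub_rev]
  calc |(inner ℝ (‖u‖ ^ (r - 1) • u - ‖v‖ ^ (r - 1) • v) w : ℝ)|
      ≤ ‖‖u‖ ^ (r - 1) • u - ‖v‖ ^ (r - 1) • v‖ * ‖w‖ := abs_real_inner_le_norm _ _
    _ ≤ r * (‖u‖ + ‖v‖) ^ (r - 1) * ‖u - v‖ * ‖w‖ := by
        apply mul_le_mul_of_nonneg_right key (norm_nonneg w)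
end

section
/- Let ω > 0, T > 0 and h ∈ L²(0,T;ℝ). If u is the unique T-periodic solution of u' + ωu = h, then there exists a constant C depending only on T and a lower bound ω₁ ≤ ω (with ω₁ > 0 fixed) such that sup_{t∈[0,T]} |u(t)|² ≤ (C/ω) ∫₀^T h(s)² ds. -/
open Real MeasureTheory Set Filter

lemma sq_integral_eq {t : ℝ} (ht : 0 ≤ t) {f : ℝ → ℝ}
    (hf : IntegrableOn f (Ioc 0 t)) :
    (∫ x in Ioc (0:ℝ) t, f x) ^ 2
      = 2 * ∫ s in Ioc (0:ℝ) t, (∫ x in Ioc (0:ℝ) s, f x) * f s := by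
  set μ := volume.restrict (Ioc (0:ℝ) t) with hμ
  have hfμ : Integrable f μ := hf
  set F : ℝ → ℝ := fun x => ∫ y in Ioc (0:ℝ) x, f y with hF
  -- continuity and boundedness of F on [0,t]
  have hFcont : ContinuousOn F (Icc 0 t) := by
    apply intervalIntegral.continuousOn_primitive
    exact (integrableOn_Icc_iff_integrableOn_Ioc).2 hf
  obtain ⟨M, hM⟩ := isCompact_Icc.exists_bound_of_continuousOn hFcont
  -- integrability of f * F on Ioc 0 t
  have hFmeas : AEStronglyMeasurable F μ := by
    have h0 : AEStronglyMeasurable F (volume.restrict (Icc (0:ℝ) t)) :=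
      hFcont.aestronglyMeasurable measurableSet_Icc
    exact h0.mono_measure (Measure.restrict_mono Ioc_subset_Icc_self le_rfl)
  have hFbd : ∀ᵐ x ∂μ, ‖F x‖ ≤ M := by
    refine (ae_restrict_iff' measurableSet_Ioc).2 (Filter.Eventually.of_forall ?_)
    exact fun x hx => hM x (Ioc_subset_Icc_self hx)
  have hfF : Integrable (fun x => F x * f x) μ := hfμ.bdd_mul hFmeas hFbd
  -- the two-variable function
  set G : ℝ × ℝ → ℝ := ({q : ℝ × ℝ | q.2 ≤ q.1}).indicator (fun q => f q.2 * f q.1) with hG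
  have hGint : Integrable G (μ.prod μ) := by
    have hbase : Integrable (fun z : ℝ × ℝ => f z.2 * f z.1) (μ.prod μ) := by
      simpa [mul_comm] using hfμ.mul_prod hfμ
    exact hbase.indicator (measurableSet_le measurable_snd measurable_fst)
  have hswap : (∫ s, ∫ x, G (s, x) ∂μ ∂μ) = ∫ x, ∫ s, G (s, x) ∂μ ∂μ := by
    apply integral_integral_swap
    exact hGint
  -- inner integral, first order
  have inner1 : ∀ s ∈ Ioc (0:ℝ) t, (∫ x, G (s, x) ∂μ) = F s * f s := by
    intro s hs
    have h1 : (fun x => G (s, x)) = (Iic s).indicator (fun x => f x * f s) := by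
      funext x
      simp [hG, Set.indicator_apply, mem_Iic]
    rw [h1, integral_indicator measurableSet_Iic, hμ,
      Measure.restrict_restrict measurableSet_Iic]
    have hset : Iic s ∩ Ioc 0 t = Ioc 0 s := by
      ext x
      constructor
      · rintro ⟨h1', h2', _⟩; exact ⟨h2', h1'⟩
      · rintro ⟨h1', h2'⟩; exact ⟨h2', h1', h2'.trans hs.2⟩
    rw [hset, integral_mul_const]
  -- inner integral, second order
  have inner2 : ∀ x ∈ Ioc (0:ℝ) t, (∫ s, G (s, x) ∂μ) = f x * (F t - F x) := by
    intro x hx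
    have h1 : (fun s => G (s, x)) = (Ici x).indicator (fun s => f x * f s) := by
      funext s
      simp [hG, Set.indicator_apply, mem_Ici]
    rw [h1, integral_indicator measurableSet_Ici, hμ,
      Measure.restrict_restrict measurableSet_Ici]
    have hset : Ici x ∩ Ioc 0 t = Icc x t := by
      ext y
      constructor
      · rintro ⟨h1', _, h3'⟩; exact ⟨h1', h3'⟩
      · rintro ⟨h1', h2'⟩; exact ⟨h1', hx.1.trans_le h1', h2'⟩
    have hsplit : (∫ s in Ioc x t, f s) = F t - F x := by
      have hun : Ioc (0:ℝ) x ∪ Ioc x t = Ioc 0 t := Ioc_union_Ioc_eq_Ioc hx.1.le hx.2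
      have h2 := setIntegral_union (μ := volume) (f := f) (s := Ioc (0:ℝ) x)
        (t := Ioc x t) (Ioc_disjoint_Ioc_of_le le_rfl) measurableSet_Ioc
        (hf.mono_set (by rw [← hun]; exact subset_union_left))
        (hf.mono_set (by rw [← hun]; exact subset_union_right))
      rw [hun] at h2
      simp only [hF]
      linarith [h2]
    rw [hset, integral_Icc_eq_integral_Ioc, integral_const_mul, hsplit]
  -- put together
  have lhs_eq : (∫ s, ∫ x, G (s, x) ∂μ ∂μ) = ∫ s in Ioc (0:ℝ) t, F s * f s := by
    rw [hμ]
    exact setIntegral_congr_fun measurableSet_Ioc inner1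
  have rhs_eq : (∫ x, ∫ s, G (s, x) ∂μ ∂μ) = F t * F t - ∫ s in Ioc (0:ℝ) t, F s * f s := by
    rw [hμ]
    rw [setIntegral_congr_fun measurableSet_Ioc inner2]
    have : ∀ x, f x * (F t - F x) = f x * F t - F x * f x := by intro x; ring
    simp_rw [this]
    rw [integral_sub (hfμ.mul_const _) hfF, integral_mul_const]
  have key : (∫ s in Ioc (0:ℝ) t, F s * f s) = F t * F t - ∫ s in Ioc (0:ℝ) t, F s * f s :=
    by
    conv_lhs => rw [← lhs_eq]
    rw [hswap, rhs_eq]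
  have : F t ^ 2 = 2 * ∫ s in Ioc (0:ℝ) t, F s * f s := by nlinarith [key]
  simpa [hF] using this

lemma bootstrap {T ω : ℝ} (hT : 0 < T) (hω : 0 < ω) {h u : ℝ → ℝ}
    (hh : IntegrableOn h (Ioc 0 T))
    (heq : ∀ t ∈ Icc (0:ℝ) T, u t = u 0 + ∫ s in (0:ℝ)..t, (h s - ω * u s)) :
    IntegrableOn (fun s => h s - ω * u s) (Ioc 0 T) := by
  set f : ℝ → ℝ := fun s => h s - ω * u s with hfdef
  set S : Set ℝ := {r : ℝ | r ∈ Icc (0:ℝ) T ∧ IntegrableOn f (Ioc 0 r)} with hSdef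
  have hS0 : (0:ℝ) ∈ S := by
    refine ⟨⟨le_refl 0, hT.le⟩, ?_⟩
    simp [IntegrableOn]
  have hSdown : ∀ r ∈ S, ∀ r', 0 ≤ r' → r' ≤ r → r' ∈ S := by
    intro r hr r' h0 hle
    exact ⟨⟨h0, hle.trans hr.1.2⟩, hr.2.mono_set (Ioc_subset_Ioc_right hle)⟩
  set φ : ℝ → ℝ := fun r => ∫ s in Ioc (0:ℝ) r, |f s| with hφdef
  have hφ0 : ∀ r, 0 ≤ φ r := fun r => setIntegral_nonneg measurableSet_Ioc
    (fun x _ => abs_nonneg _)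
  have hφmono : ∀ a b, a ≤ b → (b ∈ S ∨ b ≤ 0) → φ a ≤ φ b := by
    intro a b hab hb
    rcases hb with hb | hb
    · rcases le_or_gt a 0 with ha | ha
      · simp only [hφdef]
        rw [Ioc_eq_empty (by exact fun hlt => absurd hlt (not_lt.2 ha))]
        simp [hφ0 b]
        exact hφ0 b
      · exact setIntegral_mono_set hb.2.abs
          ((ae_restrict_iff' measurableSet_Ioc).2 (ae_of_all _ (fun x _ => abs_nonneg _)))
          (HasSubset.Subset.eventuallyLE (Ioc_subset_Ioc_right hab))
    · simp only [hφdef]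
      rw [Ioc_eq_empty (by exact fun hlt => absurd hlt (not_lt.2 (hab.trans hb))),
        Ioc_eq_empty (by exact fun hlt => absurd hlt (not_lt.2 hb))]
  -- u equals primitive on S
  have hu_eq : ∀ r, r ∈ S → u r = u 0 + ∫ s in Ioc (0:ℝ) r, f s := by
    intro r hr
    rw [heq r hr.1, intervalIntegral.integral_of_le hr.1.1]
  have hu_bd : ∀ r, r ∈ S → |u r| ≤ |u 0| + φ r := by
    intro r hr
    rw [hu_eq r hr]
    refine (abs_add_le _ _).trans ((add_le_add_iff_left _).2 ?_)
    simpa [Real.norm_eq_abs] using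
      norm_integral_le_integral_norm (μ := volume.restrict (Ioc 0 r)) f
  -- u is continuous (hence integrable) on [0, r] for r ∈ S
  have hucont : ∀ r, r ∈ S → ContinuousOn u (Icc 0 r) := by
    intro r hr
    have hprim : ContinuousOn (fun x => ∫ s in Ioc (0:ℝ) x, f s) (Icc 0 r) :=
      intervalIntegral.continuousOn_primitive
        ((integrableOn_Icc_iff_integrableOn_Ioc).2 hr.2)
    have hc2 : ContinuousOn (fun x => u 0 + ∫ s in Ioc (0:ℝ) x, f s) (Icc 0 r) :=
      (continuousOn_const (c := u 0)).add hprim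
    refine hc2.congr ?_
    intro x hx
    exact hu_eq x (hSdown r hr x hx.1 hx.2)
  have huint : ∀ r, r ∈ S → IntegrableOn u (Ioc 0 r) := by
    intro r hr
    exact ((hucont r hr).integrableOn_Icc).mono_set Ioc_subset_Icc_self
  -- ψ construction and key inequality
  set A : ℝ := (∫ s in Ioc (0:ℝ) T, |h s|) + ω * T * |u 0| with hAdef
  have hA0 : 0 ≤ A := add_nonneg
    (setIntegral_nonneg measurableSet_Ioc (fun x _ => abs_nonneg _))
    (by positivity)
  have hhabs : IntegrableOn (fun s => |h s|) (Ioc 0 T) := hh.abs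
  have hψmono : ∀ t ∈ S, Monotone (fun s => φ (min s t)) := by
    intro t ht a b hab
    refine hφmono _ _ (min_le_min_right t hab) ?_
    rcases le_or_gt 0 (min b t) with h0 | h0
    · exact Or.inl (hSdown t ht _ h0 (min_le_right _ _))
    · exact Or.inr h0.le
  have hψint : ∀ t ∈ S, IntegrableOn (fun s => φ (min s t)) (Ioc 0 t) := by
    intro t ht
    have hmeas : Measurable (fun s => φ (min s t)) := (hψmono t ht).measurable
    refine Integrable.mono' (g := fun _ => φ t)
      ((integrableOn_const_iff (C := φ t)).2 (Or.inr measure_Ioc_lt_top))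
      hmeas.aestronglyMeasurable ?_
    refine (ae_restrict_iff' measurableSet_Ioc).2 (ae_of_all _ (fun x hx => ?_))
    rw [Real.norm_eq_abs, abs_of_nonneg (hφ0 _)]
    exact hφmono _ _ (min_le_right _ _) (Or.inl ht)
  have hKI : ∀ t, t ∈ S → φ t ≤ A + ω * ∫ s in Ioc (0:ℝ) t, φ (min s t) := by
    intro t ht
    have hint1 : IntegrableOn (fun s => |h s|) (Ioc 0 t) :=
      hhabs.mono_set (Ioc_subset_Ioc_right ht.1.2)
    have hint2 : IntegrableOn (fun s => |h s| + (ω * |u 0| + ω * φ (min s t)))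
        (Ioc 0 t) := by
      refine hint1.add (Integrable.add ?_ ((hψint t ht).const_mul ω))
      exact (integrableOn_const_iff (C := ω * |u 0|)).2 (Or.inr measure_Ioc_lt_top)
    have hmono := setIntegral_mono_on (μ := volume) (s := Ioc (0:ℝ) t)
      (f := fun s => |f s|)
      (g := fun s => |h s| + (ω * |u 0| + ω * φ (min s t)))
      ht.2.abs hint2 measurableSet_Ioc ?_
    · have hsplit : ∫ s in Ioc (0:ℝ) t, (|h s| + (ω * |u 0| + ω * φ (min s t)))
          = (∫ s in Ioc (0:ℝ) t, |h s|) + ((ω * |u 0|) * t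
            + ω * ∫ s in Ioc (0:ℝ) t, φ (min s t)) := by
        have hc : IntegrableOn (fun _ : ℝ => ω * |u 0|) (Ioc 0 t) :=
          (integrableOn_const_iff (C := ω * |u 0|)).2 (Or.inr measure_Ioc_lt_top)
        have hadd : IntegrableOn (fun s => ω * |u 0| + ω * φ (min s t)) (Ioc 0 t) :=
          hc.add ((hψint t ht).const_mul ω)
        have e1 := integral_add (μ := volume.restrict (Ioc (0:ℝ) t))
          (f := fun s => |h s|) (g := fun s => ω * |u 0| + ω * φ (min s t)) hint1 hadd
        have e2 := integral_add (μ := volume.restrict (Ioc (0:ℝ) t))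
          (f := fun _ => ω * |u 0|) (g := fun s => ω * φ (min s t)) hc
          ((hψint t ht).const_mul ω)
        rw [e1, e2, setIntegral_const, integral_const_mul, measureReal_def]
        rw [Real.volume_Ioc, smul_eq_mul]
        rw [ENNReal.toReal_ofReal (by linarith [ht.1.1])]
        ring_nf
      have hh_le : (∫ s in Ioc (0:ℝ) t, |h s|) ≤ ∫ s in Ioc (0:ℝ) T, |h s| :=
        setIntegral_mono_set hhabs
          ((ae_restrict_iff' measurableSet_Ioc).2 (ae_of_all _ (fun x _ => abs_nonneg _)))
          (HasSubset.Subset.eventuallyLE (Ioc_subset_Ioc_right ht.1.2))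
      have ht_le : (ω * |u 0|) * t ≤ ω * T * |u 0| := by
        have h4 : ω * |u 0| * t ≤ ω * |u 0| * T :=
          mul_le_mul_of_nonneg_left ht.1.2 (by positivity)
        calc ω * |u 0| * t ≤ ω * |u 0| * T := h4
          _ = ω * T * |u 0| := by ring
      calc φ t ≤ _ := hmono
        _ = _ := hsplit
        _ ≤ A + ω * ∫ s in Ioc (0:ℝ) t, φ (min s t) := by
            rw [hAdef]; linarith
    · intro s hs
      have hsS : s ∈ S := hSdown t ht s hs.1.le (hs.2)
      have h1 : |f s| ≤ |h s| + ω * |u s| := by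
        rw [hfdef]
        refine (abs_sub _ _).trans ?_
        rw [abs_mul, abs_of_pos hω]
      have h2 : |u s| ≤ |u 0| + φ s := hu_bd s hsS
      have h3 : φ s = φ (min s t) := by rw [min_eq_left hs.2]
      show |f s| ≤ |h s| + (ω * |u 0| + ω * φ (min s t))
      nlinarith [mul_le_mul_of_nonneg_left h2 hω.le]
  -- discrete Gronwall induction
  set δ : ℝ := 1 / (2 * ω) with hδdef
  have hδ0 : 0 < δ := by positivity
  set M : ℕ → ℝ := fun k => Nat.rec 0 (fun _ m => 2 * (A + ω * T * m)) k with hMdef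
  have hM0 : ∀ k, 0 ≤ M k := by
    intro k
    induction k with
    | zero => simp [hMdef]
    | succ n ih =>
      show (0:ℝ) ≤ 2 * (A + ω * T * M n)
      nlinarith [mul_nonneg (mul_nonneg hω.le hT.le) ih, hA0]
  have hMsucc : ∀ k, M (k + 1) = 2 * (A + ω * T * M k) := fun k => rfl
  have hInd : ∀ k : ℕ, ∀ t, t ∈ S → t ≤ k * δ → φ t ≤ M k := by
    intro k
    induction k with
    | zero =>
      intro t htS htle
      have ht0 : t = 0 := le_antisymm (by simpa using htle) htS.1.1
      subst ht0
      simp only [hφdef]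
      simp [hM0 0]
    | succ k ih =>
      intro t htS htle
      set m : ℝ := min t (k * δ) with hmdef
      have hm0 : 0 ≤ m := le_min htS.1.1 (by positivity)
      have hmt : m ≤ t := min_le_left _ _
      have hmS : m ∈ S := hSdown t htS m hm0 hmt
      have hKIt := hKI t htS
      -- split the integral
      have hsplit : (∫ s in Ioc (0:ℝ) t, φ (min s t))
          = (∫ s in Ioc (0:ℝ) m, φ (min s t)) + ∫ s in Ioc m t, φ (min s t) := by
        have hun : Ioc (0:ℝ) m ∪ Ioc m t = Ioc 0 t := Ioc_union_Ioc_eq_Ioc hm0 hmt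
        have h2 := setIntegral_union (μ := volume) (f := fun s => φ (min s t))
          (s := Ioc (0:ℝ) m) (t := Ioc m t) (Ioc_disjoint_Ioc_of_le le_rfl) measurableSet_Ioc
          ((hψint t htS).mono_set (by rw [← hun]; exact subset_union_left))
          ((hψint t htS).mono_set (by rw [← hun]; exact subset_union_right))
        rw [hun] at h2
        exact h2
      -- bound on first piece
      have hb1 : (∫ s in Ioc (0:ℝ) m, φ (min s t)) ≤ M k * T := by
        have hle : (∫ s in Ioc (0:ℝ) m, φ (min s t)) ≤ ∫ s in Ioc (0:ℝ) m, M k := by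
          refine setIntegral_mono_on
            ((hψint t htS).mono_set (Ioc_subset_Ioc_right hmt))
            ((integrableOn_const_iff (C := M k)).2 (Or.inr measure_Ioc_lt_top))
            measurableSet_Ioc (fun s hs => ?_)
          have hsS : s ∈ S := hSdown m hmS s hs.1.le hs.2
          rw [min_eq_left (hs.2.trans hmt)]
          exact ih s hsS (hs.2.trans (min_le_right _ _))
        have : (∫ s in Ioc (0:ℝ) m, (M k : ℝ)) = (volume (Ioc (0:ℝ) m)).toReal * M k := by
          rw [setIntegral_const, smul_eq_mul]; rfl
        rw [this] at hle
        refine hle.trans ?_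
        rw [Real.volume_Ioc, ENNReal.toReal_ofReal (by linarith)]
        have hmT : m - 0 ≤ T := by
          have := hmt.trans htS.1.2
          linarith
        nlinarith [hM0 k]
      -- bound on second piece
      have hb2 : (∫ s in Ioc m t, φ (min s t)) ≤ (t - m) * φ t := by
        have hle : (∫ s in Ioc m t, φ (min s t)) ≤ ∫ s in Ioc m t, φ t := by
          refine setIntegral_mono_on
            ((hψint t htS).mono_set (Ioc_subset_Ioc_left hm0))
            ((integrableOn_const_iff (C := φ t)).2 (Or.inr measure_Ioc_lt_top))
            measurableSet_Ioc (fun s hs => ?_)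
          exact hφmono _ _ (min_le_right _ _) (Or.inl htS)
        have : (∫ s in Ioc m t, (φ t : ℝ)) = (volume (Ioc m t)).toReal * φ t := by
          rw [setIntegral_const, smul_eq_mul]; rfl
        rw [this, Real.volume_Ioc, ENNReal.toReal_ofReal (by linarith)] at hle
        exact hle
      have htm : t - m ≤ δ := by
        rcases min_cases t (k * δ) with ⟨he, _⟩ | ⟨he, hlt⟩
        · rw [hmdef, he]; linarith
        · rw [hmdef, he]
          have hc : t ≤ (k : ℝ) * δ + δ := by push_cast at htle; linarith
          linarith
      have hωδ : ω * δ = 1 / 2 := by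
        rw [hδdef]; field_simp
      -- combine
      have hcomb : φ t ≤ A + ω * (M k * T + (t - m) * φ t) := by
        refine hKIt.trans ?_
        have : (∫ s in Ioc (0:ℝ) t, φ (min s t)) ≤ M k * T + (t - m) * φ t := by
          rw [hsplit]; linarith
        nlinarith
      have hfin : ω * ((t - m) * φ t) ≤ (1/2) * φ t := by
        have h1 : ω * ((t - m) * φ t) = (ω * (t - m)) * φ t := by ring
        have h2 : ω * (t - m) ≤ ω * δ := mul_le_mul_of_nonneg_left htm hω.le
        rw [h1]
        have h3 : (ω * (t-m)) * φ t ≤ (ω * δ) * φ t :=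
          mul_le_mul_of_nonneg_right h2 (hφ0 t)
        rw [hωδ] at h3
        linarith
      rw [hMsucc k]
      nlinarith [hφ0 t]
  -- uniform bound on φ over S
  obtain ⟨N, hN⟩ := exists_nat_ge (T / δ)
  have hTN : T ≤ N * δ := by
    rw [div_le_iff₀ hδ0] at hN
    linarith
  set Mb : ℝ := M N with hMbdef
  have hφbd : ∀ t, t ∈ S → φ t ≤ Mb := fun t ht =>
    hInd N t ht (ht.1.2.trans hTN)
  have hubd : ∀ t, t ∈ S → |u t| ≤ |u 0| + Mb := fun t ht =>
    (hu_bd t ht).trans ((add_le_add_iff_left _).2 (hφbd t ht))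
  -- sSup argument
  have hSne : S.Nonempty := ⟨0, hS0⟩
  have hSbdd : BddAbove S := ⟨T, fun x hx => hx.1.2⟩
  set τ : ℝ := sSup S with hτdef
  have hτ0 : 0 ≤ τ := le_csSup hSbdd hS0
  have hτT : τ ≤ T := csSup_le hSne (fun x hx => hx.1.2)
  have hsub : Ioo 0 τ ⊆ S := by
    intro x hx
    obtain ⟨s, hsS, hxs⟩ := exists_lt_of_lt_csSup hSne hx.2
    exact hSdown s hsS x hx.1.le hxs.le
  -- measurability of f on Ioo 0 τ
  obtain ⟨x, hxmono, hxtend, hxS⟩ := exists_seq_tendsto_sSup hSne hSbdd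
  have hE : Ioo (0:ℝ) τ ⊆ ⋃ n, Ioc (0:ℝ) (x n) := by
    intro y hy
    have : ∀ᶠ n in atTop, y < x n := (tendsto_order.1 hxtend).1 y hy.2
    obtain ⟨n, hn⟩ := this.exists
    exact mem_iUnion.2 ⟨n, hy.1, hn.le⟩
  have hfmeasE : AEStronglyMeasurable f (volume.restrict (⋃ n, Ioc (0:ℝ) (x n))) := by
    rw [aestronglyMeasurable_iUnion_iff]
    exact fun n => (hxS n).2.aestronglyMeasurable
  have hfmeas : AEStronglyMeasurable f (volume.restrict (Ioo 0 τ)) :=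
    hfmeasE.mono_measure (Measure.restrict_mono hE le_rfl)
  have hfIoo : IntegrableOn f (Ioo 0 τ) := by
    refine Integrable.mono' (g := fun s => |h s| + ω * (|u 0| + Mb)) ?_ hfmeas ?_
    · refine Integrable.add (hhabs.mono_set ?_) ?_
      · exact fun y hy => ⟨hy.1, hy.2.le.trans hτT⟩
      · exact (integrableOn_const_iff (C := ω * (|u 0| + Mb))).2 (Or.inr measure_Ioo_lt_top)
    · refine (ae_restrict_iff' measurableSet_Ioo).2 (ae_of_all _ (fun s hs => ?_))
      have hsS : s ∈ S := hsub hs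
      have h1 : |f s| ≤ |h s| + ω * |u s| := by
        rw [hfdef]
        refine (abs_sub _ _).trans ?_
        rw [abs_mul, abs_of_pos hω]
      have h2 := hubd s hsS
      rw [Real.norm_eq_abs]
      have h3 : ω * |u s| ≤ ω * (|u 0| + Mb) := mul_le_mul_of_nonneg_left h2 hω.le
      calc |f s| ≤ |h s| + ω * |u s| := h1
        _ ≤ |h s| + ω * (|u 0| + Mb) := by linarith
  have hτS : τ ∈ S := by
    refine ⟨⟨hτ0, hτT⟩, ?_⟩
    exact (integrableOn_Ioc_iff_integrableOn_Ioo).2 hfIoo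
  -- beyond τ the function u is constant
  have huτ : ∀ s ∈ Ioc τ T, u s = u 0 := by
    intro s hs
    have hsI : s ∈ Icc (0:ℝ) T := ⟨hτ0.trans hs.1.le, hs.2⟩
    have hns : ¬ IntegrableOn f (Ioc 0 s) := by
      intro hcon
      have : s ∈ S := ⟨hsI, hcon⟩
      exact absurd (le_csSup hSbdd this) (not_le.2 hs.1)
    rw [heq s hsI, intervalIntegral.integral_of_le hsI.1, integral_undef hns]
    ring
  have hfτT : IntegrableOn f (Ioc τ T) := by
    have : IntegrableOn (fun s => h s - ω * u 0) (Ioc τ T) := by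
      refine (hh.mono_set (fun y hy => ⟨hτ0.trans_lt hy.1, hy.2⟩)).sub ?_
      exact (integrableOn_const_iff (C := ω * u 0)).2 (Or.inr measure_Ioc_lt_top)
    refine this.congr_fun (fun y hy => ?_) measurableSet_Ioc
    simp only [hfdef]
    rw [huτ y hy]
  have hun : Ioc (0:ℝ) τ ∪ Ioc τ T = Ioc 0 T := Ioc_union_Ioc_eq_Ioc hτ0 hτT
  have := hτS.2.union hfτT
  rwa [hun] at this

set_option maxHeartbeats 1000000 in
theorem stmt_5_aux {T ω₁ : ℝ} (hT : 0 < T) (hω₁ : 0 < ω₁)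
    {ω : ℝ} (hω : ω₁ ≤ ω) {h u : ℝ → ℝ}
    (hMem : MemLp h 2 (volume.restrict (Ioc (0 : ℝ) T)))
    (heq : ∀ t ∈ Icc (0 : ℝ) T, u t = u 0 + ∫ s in (0 : ℝ)..t, (h s - ω * u s))
    (hper : u 0 = u T) :
    ∀ t ∈ Icc (0 : ℝ) T,
      (u t) ^ 2 ≤ ((1 / (T * ω₁) + 8) / ω) * ∫ s in (0 : ℝ)..T, (h s) ^ 2 := by
  have hω0 : 0 < ω := hω₁.trans_le hω
  haveI hfinm : IsFiniteMeasure (volume.restrict (Ioc (0:ℝ) T)) :=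
    ⟨by rw [Measure.restrict_apply_univ]; exact measure_Ioc_lt_top⟩
  have hh1 : IntegrableOn h (Ioc 0 T) := hMem.integrable one_le_two
  have hh2 : IntegrableOn (fun s => h s ^ 2) (Ioc 0 T) := hMem.integrable_sq
  set K : ℝ := ∫ s in Ioc (0:ℝ) T, h s ^ 2 with hKdef
  have hK0 : 0 ≤ K := setIntegral_nonneg measurableSet_Ioc (fun x _ => sq_nonneg _)
  set f : ℝ → ℝ := fun s => h s - ω * u s with hfdef
  have hfint : IntegrableOn f (Ioc 0 T) := bootstrap hT hω0 hh1 heq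
  set F : ℝ → ℝ := fun r => ∫ s in Ioc (0:ℝ) r, f s with hFdef
  have hueq : ∀ r ∈ Icc (0:ℝ) T, u r = u 0 + F r := by
    intro r hr
    rw [heq r hr, intervalIntegral.integral_of_le hr.1]
  have hFcont : ContinuousOn F (Icc 0 T) :=
    intervalIntegral.continuousOn_primitive
      ((integrableOn_Icc_iff_integrableOn_Ioc).2 hfint)
  have hucont : ContinuousOn u (Icc 0 T) := by
    have hc2 : ContinuousOn (fun x => u 0 + F x) (Icc 0 T) :=
      (continuousOn_const (c := u 0)).add hFcont
    exact hc2.congr hueq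
  obtain ⟨Mu, hMu⟩ := isCompact_Icc.exists_bound_of_continuousOn hucont
  have humeas : AEStronglyMeasurable u (volume.restrict (Ioc (0:ℝ) T)) := by
    have h0 : AEStronglyMeasurable u (volume.restrict (Icc (0:ℝ) T)) :=
      hucont.aestronglyMeasurable measurableSet_Icc
    exact h0.mono_measure (Measure.restrict_mono Ioc_subset_Icc_self le_rfl)
  have hubd : ∀ᵐ x ∂(volume.restrict (Ioc (0:ℝ) T)), ‖u x‖ ≤ Mu :=
    (ae_restrict_iff' measurableSet_Ioc).2
      (ae_of_all _ fun x hx => hMu x (Ioc_subset_Icc_self hx))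
  have huf : IntegrableOn (fun x => u x * f x) (Ioc 0 T) := hfint.bdd_mul humeas hubd
  have huh : IntegrableOn (fun x => u x * h x) (Ioc 0 T) := hh1.bdd_mul humeas hubd
  have huint : IntegrableOn u (Ioc 0 T) :=
    (hucont.integrableOn_Icc).mono_set Ioc_subset_Icc_self
  have hu2 : IntegrableOn (fun x => u x ^ 2) (Ioc 0 T) := by
    have := huint.bdd_mul humeas hubd
    simpa [pow_two, IntegrableOn] using this
  set I2 : ℝ := ∫ x in Ioc (0:ℝ) T, u x ^ 2 with hI2def
  have hI20 : 0 ≤ I2 := setIntegral_nonneg measurableSet_Ioc (fun x _ => sq_nonneg _)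
  -- main energy identity
  have MI : ∀ r ∈ Icc (0:ℝ) T, u r ^ 2 = u 0 ^ 2 + 2 * ∫ x in Ioc (0:ℝ) r, u x * f x := by
    intro r hr
    have hfr : IntegrableOn f (Ioc 0 r) := hfint.mono_set (Ioc_subset_Ioc_right hr.2)
    have hL := sq_integral_eq hr.1 hfr
    obtain ⟨MF, hMF⟩ := isCompact_Icc.exists_bound_of_continuousOn hFcont
    have hFmeas : AEStronglyMeasurable F (volume.restrict (Ioc (0:ℝ) r)) := by
      have h0 : AEStronglyMeasurable F (volume.restrict (Icc (0:ℝ) T)) :=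
        hFcont.aestronglyMeasurable measurableSet_Icc
      exact h0.mono_measure (Measure.restrict_mono
        (Ioc_subset_Icc_self.trans (Icc_subset_Icc_right hr.2)) le_rfl)
    have hFbd : ∀ᵐ x ∂(volume.restrict (Ioc (0:ℝ) r)), ‖F x‖ ≤ MF :=
      (ae_restrict_iff' measurableSet_Ioc).2
        (ae_of_all _ fun x hx => hMF x (Icc_subset_Icc_right hr.2 (Ioc_subset_Icc_self hx)))
    have hFf : IntegrableOn (fun x => F x * f x) (Ioc 0 r) := hfr.bdd_mul hFmeas hFbd
    have hcong : (∫ x in Ioc (0:ℝ) r, u x * f x)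
        = ∫ x in Ioc (0:ℝ) r, (u 0 * f x + F x * f x) := by
      refine setIntegral_congr_fun measurableSet_Ioc (fun x hx => ?_)
      rw [hueq x ⟨hx.1.le, hx.2.trans hr.2⟩]; ring
    have hadd := integral_add (μ := volume.restrict (Ioc (0:ℝ) r))
      (f := fun x => u 0 * f x) (g := fun x => F x * f x) (hfr.const_mul _) hFf
    rw [hueq r hr, hcong, hadd, integral_const_mul]
    have hFr : (∫ x in Ioc (0:ℝ) r, f x) = F r := rfl
    rw [hFr]
    have e : (u 0 + F r) ^ 2 = u 0 ^ 2 + 2 * u 0 * F r + F r ^ 2 := by ring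
    rw [e, hL]; ring
  -- periodicity gives zero total energy flux
  have hQT : (∫ x in Ioc (0:ℝ) T, u x * f x) = 0 := by
    have := MI T ⟨hT.le, le_refl T⟩
    rw [← hper] at this
    linarith
  have hsub : (∫ x in Ioc (0:ℝ) T, u x * f x)
      = (∫ x in Ioc (0:ℝ) T, u x * h x) - ω * I2 := by
    have hpt : ∀ x, u x * f x = u x * h x - ω * (u x ^ 2) := by
      intro x; simp only [hfdef]; ring
    simp_rw [hpt]
    rw [integral_sub huh (hu2.const_mul ω), integral_const_mul]
  have hUH : (∫ x in Ioc (0:ℝ) T, u x * h x) = ω * I2 := by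
    rw [hsub] at hQT; linarith
  -- Young inequality bounds
  have hYoung : (2 * ω) * (∫ x in Ioc (0:ℝ) T, u x * h x) ≤ ω ^ 2 * I2 + K := by
    have hf1 : IntegrableOn (fun x => 2 * ω * (u x * h x)) (Ioc 0 T) := huh.const_mul _
    have hg1 : IntegrableOn (fun x => ω ^ 2 * u x ^ 2 + h x ^ 2) (Ioc 0 T) :=
      (hu2.const_mul _).add hh2
    have hpt1 : ∀ x ∈ Ioc (0:ℝ) T, 2 * ω * (u x * h x) ≤ ω ^ 2 * u x ^ 2 + h x ^ 2 :=
      fun x _ => by nlinarith [sq_nonneg (ω * u x - h x)]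
    have hmono := setIntegral_mono_on hf1 hg1 measurableSet_Ioc hpt1
    have hadd := integral_add (μ := volume.restrict (Ioc (0:ℝ) T))
      (f := fun x => ω ^ 2 * u x ^ 2) (g := fun x => h x ^ 2) (hu2.const_mul _) hh2
    rw [integral_const_mul] at hmono
    rw [hadd, integral_const_mul] at hmono
    exact hmono
  have hI2K : ω ^ 2 * I2 ≤ K := by nlinarith [hYoung, hUH]
  -- bound on total |u f|
  set RT : ℝ := ∫ x in Ioc (0:ℝ) T, |u x * f x| with hRTdef
  have hRT0 : 0 ≤ RT := setIntegral_nonneg measurableSet_Ioc (fun x _ => abs_nonneg _)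
  have hRT : 2 * ω * RT ≤ 3 * ω ^ 2 * I2 + K := by
    have hf1 : IntegrableOn (fun x => 2 * ω * |u x * f x|) (Ioc 0 T) :=
      huf.abs.const_mul _
    have hg1 : IntegrableOn (fun x => 3 * ω ^ 2 * u x ^ 2 + h x ^ 2) (Ioc 0 T) :=
      (hu2.const_mul _).add hh2
    have hmono := setIntegral_mono_on hf1 hg1 measurableSet_Ioc ?_
    · have hadd := integral_add (μ := volume.restrict (Ioc (0:ℝ) T))
        (f := fun x => 3 * ω ^ 2 * u x ^ 2) (g := fun x => h x ^ 2) (hu2.const_mul _) hh2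
      rw [integral_const_mul] at hmono
      rw [hadd, integral_const_mul] at hmono
      exact hmono
    · intro x _
      have h1 : |u x * f x| ≤ |u x| * |h x| + ω * (u x * u x) := by
        rw [abs_mul, hfdef]
        have h2 : |h x - ω * u x| ≤ |h x| + ω * |u x| := by
          refine (abs_sub _ _).trans ?_
          rw [abs_mul, abs_of_pos hω0]
        have h3 := mul_le_mul_of_nonneg_left h2 (abs_nonneg (u x))
        have h4 : |u x| * |u x| = u x * u x := abs_mul_abs_self _
        nlinarith
      nlinarith [mul_le_mul_of_nonneg_left h1 (by positivity : (0:ℝ) ≤ 2 * ω),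
        sq_nonneg (ω * |u x| - |h x|), abs_mul_abs_self (u x), abs_mul_abs_self (h x),
        abs_nonneg (u x), abs_nonneg (h x)]
  have hRTK : 2 * ω * RT ≤ 4 * K := by linarith
  -- pointwise-in-time bound
  intro t ht
  have hQbound : ∀ r ∈ Icc (0:ℝ) T, |∫ x in Ioc (0:ℝ) r, u x * f x| ≤ RT := by
    intro r hr
    have h1 : |∫ x in Ioc (0:ℝ) r, u x * f x| ≤ ∫ x in Ioc (0:ℝ) r, |u x * f x| := by
      have := norm_integral_le_integral_norm
        (μ := volume.restrict (Ioc 0 r)) (fun x => u x * f x)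
      simp only [Real.norm_eq_abs] at this
      exact this
    refine h1.trans ?_
    exact setIntegral_mono_set huf.abs
      ((ae_restrict_iff' measurableSet_Ioc).2 (ae_of_all _ (fun x _ => abs_nonneg _)))
      (HasSubset.Subset.eventuallyLE (Ioc_subset_Ioc_right hr.2))
  have hts : ∀ s ∈ Ioc (0:ℝ) T, u t ^ 2 ≤ u s ^ 2 + 4 * RT := by
    intro s hs
    have h1 := MI t ht
    have h2 := MI s ⟨hs.1.le, hs.2⟩
    have h3 := hQbound t ht
    have h4 := hQbound s ⟨hs.1.le, hs.2⟩
    have h5 := abs_le.1 h3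
    have h6 := abs_le.1 h4
    linarith
  have hTu : T * u t ^ 2 ≤ I2 + T * (4 * RT) := by
    have hf1 : IntegrableOn (fun _ : ℝ => u t ^ 2) (Ioc 0 T) :=
      (integrableOn_const_iff (C := u t ^ 2)).2 (Or.inr measure_Ioc_lt_top)
    have hg1 : IntegrableOn (fun s => u s ^ 2 + 4 * RT) (Ioc 0 T) :=
      hu2.add ((integrableOn_const_iff (C := 4 * RT)).2 (Or.inr measure_Ioc_lt_top))
    have hmono := setIntegral_mono_on hf1 hg1 measurableSet_Ioc hts
    have hadd := integral_add (μ := volume.restrict (Ioc (0:ℝ) T))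
      (f := fun s => u s ^ 2) (g := fun _ => 4 * RT) hu2
      ((integrableOn_const_iff (C := 4 * RT)).2 (Or.inr measure_Ioc_lt_top))
    rw [hadd, setIntegral_const, setIntegral_const, measureReal_def, Real.volume_Ioc,
      ENNReal.toReal_ofReal (by linarith), smul_eq_mul, smul_eq_mul, sub_zero] at hmono
    linarith
  -- final arithmetic
  rw [intervalIntegral.integral_of_le hT.le]
  have hI2b : I2 ≤ K / (ω₁ * ω) := by
    have h1 : I2 ≤ K / ω ^ 2 := by
      rw [le_div_iff₀ (by positivity)]
      nlinarith
    refine h1.trans ?_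
    apply div_le_div_of_nonneg_left hK0 (by positivity)
    nlinarith
  have hRTb : RT ≤ 2 * (K / ω) := by
    rw [show (2:ℝ) * (K / ω) = 2 * K / ω by ring, le_div_iff₀ hω0]
    nlinarith
  have e1 : u t ^ 2 ≤ I2 / T + 4 * RT := by
    have h1 : u t ^ 2 ≤ (I2 + T * (4 * RT)) / T := by
      rw [le_div_iff₀ hT]; nlinarith
    have h2 : (I2 + T * (4 * RT)) / T = I2 / T + 4 * RT := by
      field_simp
    rw [h2] at h1; exact h1
  have e2 : I2 / T ≤ (K / (ω₁ * ω)) / T := (div_le_div_iff_of_pos_right hT).2 hI2b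
  calc u t ^ 2 ≤ I2 / T + 4 * RT := e1
    _ ≤ (K / (ω₁ * ω)) / T + 4 * (2 * (K / ω)) := by
        refine add_le_add ?_ (by linarith)
        exact e2
    _ = (1 / (T * ω₁) + 8) / ω * K := by
        field_simp
        ring

/-- Uniform sup-bound `sup |u|² ≤ (C/ω) ∫ h²` for the `T`-periodic solution of `u' + ω u = h`,
with a constant `C` depending only on `T` and a fixed lower bound `ω₁ ≤ ω`. -/
theorem stmt_5 (T ω₁ : ℝ) (hT : 0 < T) (hω₁ : 0 < ω₁) :
    ∃ C > (0 : ℝ), ∀ ω : ℝ, ω₁ ≤ ω → ∀ h u : ℝ → ℝ,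
      MemLp h 2 (volume.restrict (Ioc (0 : ℝ) T)) →
      (∀ t ∈ Icc (0 : ℝ) T, u t = u 0 + ∫ s in (0 : ℝ)..t, (h s - ω * u s)) →
      u 0 = u T →
      ∀ t ∈ Icc (0 : ℝ) T, (u t) ^ 2 ≤ (C / ω) * ∫ s in (0 : ℝ)..T, (h s) ^ 2 := by
  refine ⟨1 / (T * ω₁) + 8, by positivity, ?_⟩
  intro ω hω h u hMem heq hper
  exact stmt_5_aux hT hω₁ hω hMem heq hper
end
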